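/- Let m > n ≥ 1 be integers and let L be the AIR matrix of size m × n with Euclidean data λ_i, β_i, l. Let (j,k) be a position with L(j,k) = 1 lying in the even-indexed block I_{λ_{2i}×β_{2i}λ_{2i}} (rows m−λ_{2i},…,m−1, columns n−λ_{2i−1},…,n−λ_{2i−1}+β_{2i}λ_{2i}−1), with local indices j_R = j − (m−λ_{2i}) and k_R = k − (n−λ_{2i−1}). (a) If 0 ≤ k_R ≤ (β_{2i}−1)λ_{2i} − 1, then the right-distance satisfies d_right(j,k) = λ_{2i}. (b) If (β_{2i}−1)λ_{2i} ≤ k_R ≤ β_{2i}λ_{2i} − 1 and 0 ≤ i ≤ ⌊l/2⌋ − 1, then, writing j_R = c·λ_{2i+1} + d with 0 ≤ d < λ_{2i+1}, d_right(j,k) = λ_{2i} − c·λ_{2i+1}. -/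

import Mathlib

set_option linter.unusedVariables false

/-- Entry (row `j`, column `k`) of the `m × n` AIR (Adjacent Independent Row) matrix,
as a 0/1 natural number, defined by the recursive construction algorithm
(stack `⌊m/n⌋` copies of `I_n`; fill the first `n - n mod (m mod n)` columns of the
remaining `m mod n` rows with horizontally stacked identities `I_{m mod n}`; recurse). -/
def airEntry : ℕ → ℕ → ℕ → ℕ → ℕ
  | m, n, j, k =>
    if hn : n = 0 then 0
    else if hr : m % n = 0 then (if j % n = k then 1 else 0)
    else if j < m - m % n then (if j % n = k then 1 else 0)
    else if k < n - n % (m % n) then (if k % (m % n) = j - (m - m % n) then 1 else 0)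
    else airEntry (m % n) (n % (m % n)) (j - (m - m % n)) (k - (n - n % (m % n)))
  termination_by m n j k => n
  decreasing_by
    have h1 : m % n < n := Nat.mod_lt _ (Nat.pos_of_ne_zero hn)
    have h2 : n % (m % n) < m % n := Nat.mod_lt _ (Nat.pos_of_ne_zero hr)
    omega
/-- Euclidean data of the `m × n` AIR matrix: `airLam m n (i+1)` is `λ_i`
(the index is shifted by one, so that `airLam m n 0 = λ_{-1} = n`,
`airLam m n 1 = λ_0 = m - n`, and `λ_{i+1} = λ_{i-1} mod λ_i`). -/
def airLam (m n : ℕ) : ℕ → ℕ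
  | 0 => n
  | 1 => m - n
  | i + 2 => if airLam m n (i + 1) = 0 then 0 else airLam m n i % airLam m n (i + 1)

/-- `airBeta m n i` is `β_i = ⌊λ_{i-1} / λ_i⌋` of the Euclidean data of the AIR matrix. -/
def airBeta (m n i : ℕ) : ℕ := airLam m n i / airLam m n (i + 1)

/-- `IsRightDist m n j k v` says that the right-distance of the entry `L(j,k)` of the
`m × n` AIR matrix equals `v`: `k + v` is the smallest column index `k' > k` with
`L(j,k') = 1`. -/
def IsRightDist (m n j k v : ℕ) : Prop :=
  0 < v ∧ k + v < n ∧ airEntry m n j (k + v) = 1 ∧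
    ∀ k' : ℕ, k < k' → k' < k + v → airEntry m n j k' = 0

/- ## helper lemmas -/

lemma airLam_zero (m n : ℕ) : airLam m n 0 = n := rfl
lemma airLam_one (m n : ℕ) : airLam m n 1 = m - n := rfl
lemma airLam_step (m n t : ℕ) :
    airLam m n (t + 2) = if airLam m n (t + 1) = 0 then 0
      else airLam m n t % airLam m n (t + 1) := rfl

lemma airLam_zero_mono (m n : ℕ) {u v : ℕ} (hu : 1 ≤ u) (huv : u ≤ v)
    (h : airLam m n u = 0) : airLam m n v = 0 := by
  induction v with
  | zero => omega
  | succ v ih =>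
    rcases Nat.lt_or_ge u (v+1) with h'|h'
    · have hv : airLam m n v = 0 := ih (by omega)
      obtain ⟨w, rfl⟩ : ∃ w, v = w + 1 := ⟨v - 1, by omega⟩
      rw [airLam_step]; simp [hv]
    · have : u = v + 1 := by omega
      subst this; exact h

lemma airLam_pos (m n : ℕ) (hn : 1 ≤ n) {u v : ℕ} (huv : u ≤ v)
    (hv : 0 < airLam m n v) : 0 < airLam m n u := by
  rcases Nat.eq_zero_or_pos u with rfl|hu
  · rw [airLam_zero]; omega
  · by_contra h
    have : airLam m n u = 0 := by omega
    have := airLam_zero_mono m n hu huv this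
    omega

lemma airLam_le_n (m n : ℕ) : ∀ u, airLam m n (u + 2) ≤ n := by
  intro u
  induction u using Nat.strong_induction_on with
  | _ u ih =>
    match u with
    | 0 =>
      rw [airLam_step]
      split
      · omega
      · exact Nat.mod_le _ _
    | 1 =>
      have h2 : airLam m n 2 ≤ n := ih 0 (by omega)
      have e : airLam m n 3 = if airLam m n 2 = 0 then 0
          else airLam m n 1 % airLam m n 2 := rfl
      show airLam m n 3 ≤ n
      rw [e]
      split
      · omega
      · rename_i h
        have := Nat.mod_lt (airLam m n 1) (y := airLam m n 2) (by omega)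
        omega
    | (t+2) =>
      rw [airLam_step]
      split
      · omega
      · calc airLam m n (t+2) % airLam m n (t+3) ≤ airLam m n (t+2) := Nat.mod_le _ _
          _ ≤ n := ih t (by omega)

lemma airLam_le_max (m n u : ℕ) (hu : 1 ≤ u) : airLam m n u ≤ max (m - n) n := by
  match u with
  | 1 => rw [airLam_one]; exact le_max_left _ _
  | (t+2) => exact le_trans (airLam_le_n m n t) (le_max_right _ _)

lemma airLam_even_le (m n u : ℕ) : airLam m n (2 * u) ≤ n := by
  match u with
  | 0 => rw [show 2*0 = 0 from rfl, airLam_zero]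
  | (t+1) => rw [show 2*(t+1) = 2*t+2 by ring]; exact airLam_le_n m n (2*t)

lemma airLam_agree (m n m' n' p q : ℕ)
    (h0 : airLam m n p = airLam m' n' q) (h1 : airLam m n (p+1) = airLam m' n' (q+1)) :
    ∀ t, airLam m n (p+t) = airLam m' n' (q+t) := by
  intro t
  induction t using Nat.twoStepInduction with
  | zero => exact h0
  | one => exact h1
  | more t ih1 ih2 =>
    rw [show p + (t+2) = (p+t)+2 by omega, show q + (t+2) = (q+t)+2 by omega,
        airLam_step, airLam_step]
    have e1 : airLam m n (p+t) = airLam m' n' (q+t) := ih1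
    have e2 : airLam m n (p+t+1) = airLam m' n' (q+t+1) := ih2
    rw [e1, e2]

/- ## entry unfolding -/

lemma airEntry_div (m n j k : ℕ) (h1 : n ≠ 0) (h2 : m % n = 0) :
    airEntry m n j k = if j % n = k then 1 else 0 := by
  rw [airEntry]; simp [h1, h2]

lemma airEntry_top (m n j k : ℕ) (h1 : n ≠ 0) (h2 : m % n ≠ 0) (h3 : j < m - m % n) :
    airEntry m n j k = if j % n = k then 1 else 0 := by
  rw [airEntry]; simp [h1, h2, h3]

lemma airEntry_botleft (m n j k : ℕ) (h1 : n ≠ 0) (h2 : m % n ≠ 0)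
    (h3 : ¬ j < m - m % n) (h4 : k < n - n % (m % n)) :
    airEntry m n j k = if k % (m % n) = j - (m - m % n) then 1 else 0 := by
  rw [airEntry]; simp [h1, h2, h3, h4]

lemma airEntry_botright (m n j k : ℕ) (h1 : n ≠ 0) (h2 : m % n ≠ 0)
    (h3 : ¬ j < m - m % n) (h4 : ¬ k < n - n % (m % n)) :
    airEntry m n j k = airEntry (m % n) (n % (m % n)) (j - (m - m % n)) (k - (n - n % (m % n))) := by
  rw [airEntry]; simp [h1, h2, h3, h4]

lemma mod_between {v a b : ℕ} (h : a % v = b % v) (h1 : a < b) (h2 : b < a + v) : False := by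
  have hd : v ∣ b - a := (Nat.modEq_iff_dvd' h1.le).mp h
  have := Nat.le_of_dvd (by omega) hd
  omega

/- ## first one in a row -/

lemma airEntry_first (m n r : ℕ) (hn : 1 ≤ n) (hnm : n < m) (hr : r < m) :
    airEntry m n r (r % n) = 1 ∧ ∀ k, k < r % n → airEntry m n r k = 0 := by
  have hn0 : n ≠ 0 := by omega
  by_cases h0 : m % n = 0
  · constructor
    · rw [airEntry_div m n r _ hn0 h0]; simp
    · intro k hk; rw [airEntry_div m n r _ hn0 h0]
      simp only [ite_eq_right_iff]; omega
  · by_cases htop : r < m - m % n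
    · constructor
      · rw [airEntry_top m n r _ hn0 h0 htop]; simp
      · intro k hk; rw [airEntry_top m n r _ hn0 h0 htop]
        simp only [ite_eq_right_iff]; omega
    · have hmd : m % n + n * (m / n) = m := Nat.mod_add_div m n
      have hq : m - m % n = n * (m / n) := by omega
      have hc1 : m / n * n = n * (m / n) := Nat.mul_comm _ _
      have hc2 : (m / n + 1) * n = n * (m / n) + n := by ring
      have hmn : m % n < n := Nat.mod_lt _ (by omega)
      have hdiv : r / n = m / n := by
        apply Nat.div_eq_of_lt_le <;> omega
      have hrn : r % n = r - (m - m % n) := by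
        have h := Nat.div_add_mod r n
        rw [hdiv] at h
        omega
      have hm1 : 0 < m % n := by omega
      have hnd : n % (m % n) + (m % n) * (n / (m % n)) = n := Nat.mod_add_div n (m % n)
      have hdivpos : 1 ≤ n / (m % n) := (Nat.one_le_div_iff hm1).mpr (le_of_lt hmn)
      have hm1le : (m % n) * 1 ≤ (m % n) * (n / (m % n)) := Nat.mul_le_mul_left _ hdivpos
      have hcols : m % n ≤ n - n % (m % n) := by omega
      have hrb : r % n < m % n := by omega
      refine ⟨?_, ?_⟩
      · rw [airEntry_botleft m n r _ hn0 h0 htop (by omega)]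
        rw [← hrn]
        simp [Nat.mod_eq_of_lt hrb]
      · intro k hk
        rw [airEntry_botleft m n r _ hn0 h0 htop (by omega)]
        have hkm : k % (m % n) = k := Nat.mod_eq_of_lt (by omega)
        simp only [ite_eq_right_iff]
        intro he
        omega

/- ## lifting right-distance from the recursive submatrix -/

lemma isRightDist_lift (m n j k v : ℕ) (h1 : n ≠ 0) (h2 : m % n ≠ 0)
    (hj : ¬ j < m - m % n) (hk : n - n % (m % n) ≤ k)
    (h : IsRightDist (m % n) (n % (m % n)) (j - (m - m % n)) (k - (n - n % (m % n))) v) :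
    IsRightDist m n j k v := by
  obtain ⟨hv, h2', h3, h4⟩ := h
  have hn1 : n % (m % n) ≤ n := Nat.mod_le _ _
  refine ⟨hv, by omega, ?_, ?_⟩
  · rw [airEntry_botright m n j (k+v) h1 h2 hj (by omega)]
    rw [show k + v - (n - n % (m % n)) = k - (n - n % (m % n)) + v by omega]
    exact h3
  · intro k' hk1 hk2
    rw [airEntry_botright m n j k' h1 h2 hj (by omega)]
    exact h4 _ (by omega) (by omega)

/- ## the two outermost blocks, directly -/

lemma baseA (m n j k : ℕ) (hn : 1 ≤ n) (h0 : m % n ≠ 0)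
    (hj1 : m ≤ j + m % n) (hj2 : j < m)
    (hk2 : k + m % n < n - n % (m % n))
    (hke : k % (m % n) = j - (m - m % n)) : IsRightDist m n j k (m % n) := by
  have hn0 : n ≠ 0 := by omega
  have hm1 : 0 < m % n := by omega
  have hn1 : n % (m % n) ≤ n := Nat.mod_le _ _
  refine ⟨hm1, by omega, ?_, ?_⟩
  · rw [airEntry_botleft m n j (k + m % n) hn0 h0 (by omega) (by omega)]
    rw [Nat.add_mod_right, hke]
    simp
  · intro k' h1 h2
    rw [airEntry_botleft m n j k' hn0 h0 (by omega) (by omega)]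
    simp only [ite_eq_right_iff]
    intro he
    exact absurd (mod_between (hke.trans he.symm) h1 h2) (by simp)

lemma baseB (m n j k c d : ℕ) (hn : 1 ≤ n) (hnm : n < m) (h0 : m % n ≠ 0)
    (hj1 : m ≤ j + m % n) (hj2 : j < m)
    (hk1 : (n / (m % n) - 1) * (m % n) ≤ k) (hk2 : k < n / (m % n) * (m % n))
    (hd : d < n % (m % n)) (hjc : j - (m - m % n) = c * (n % (m % n)) + d)
    (hke : k % (m % n) = j - (m - m % n)) :
    IsRightDist m n j k (m % n - c * (n % (m % n))) := by
  have hn0 : n ≠ 0 := by omega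
  have hm1 : 0 < m % n := by omega
  have hmn : m % n < n := Nat.mod_lt _ (by omega)
  have hn1m : n % (m % n) < m % n := Nat.mod_lt _ hm1
  have hnd : n % (m % n) + (m % n) * (n / (m % n)) = n := Nat.mod_add_div n (m % n)
  have hj' : j - (m - m % n) < m % n := by omega
  -- decompose k
  have hu := Nat.div_add_mod k (m % n)
  obtain ⟨b, hb⟩ : ∃ b, n / (m % n) = b + 1 := ⟨n / (m % n) - 1, by
    have : 1 ≤ n / (m % n) := (Nat.one_le_div_iff hm1).mpr (le_of_lt hmn)
    omega⟩
  rw [hb] at hk1 hk2 hnd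
  have hbm : (b + 1 - 1) * (m % n) = b * (m % n) := by simp
  rw [hbm] at hk1
  have hsm : (b + 1) * (m % n) = b * (m % n) + m % n := by ring
  rw [hsm] at hk2
  have hmb : (m % n) * (b + 1) = b * (m % n) + m % n := by ring
  rw [hmb] at hnd
  -- k / (m%n) = b
  have hub : k / (m % n) = b := by
    have h1 : (m % n) * (k / (m % n)) < (m % n) * (b + 1) := by
      rw [hmb]; omega
    have h2 : (m % n) * b < (m % n) * (k / (m % n) + 1) := by
      have : b * (m % n) = (m % n) * b := Nat.mul_comm _ _
      have h3 : (m % n) * (k / (m % n) + 1) = (m % n) * (k / (m % n)) + m % n := by ring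
      omega
    have := Nat.lt_of_mul_lt_mul_left h1
    have := Nat.lt_of_mul_lt_mul_left h2
    omega
  have hkval : k = b * (m % n) + (j - (m - m % n)) := by
    rw [hub] at hu
    have : (m % n) * b = b * (m % n) := Nat.mul_comm _ _
    omega
  have hcd : c * (n % (m % n)) + d < m % n := by omega
  have hvpos : 0 < m % n - c * (n % (m % n)) := by omega
  have hvle : m % n - c * (n % (m % n)) ≤ m % n := by omega
  have hkv : k + (m % n - c * (n % (m % n))) = (n - n % (m % n)) + d := by omega
  have hsub1 : 1 ≤ n % (m % n) := by omega
  have hsubm : n % (m % n) < m % n := hn1m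
  have hfirst := airEntry_first (m % n) (n % (m % n)) (j - (m - m % n)) hsub1 hsubm hj'
  have hdm : (j - (m - m % n)) % (n % (m % n)) = d := by
    rw [hjc, Nat.mul_comm, Nat.mul_add_mod]
    exact Nat.mod_eq_of_lt hd
  refine ⟨hvpos, by omega, ?_, ?_⟩
  · rw [airEntry_botright m n j _ hn0 h0 (by omega) (by omega)]
    rw [show k + (m % n - c * (n % (m % n))) - (n - n % (m % n)) = d by omega]
    rw [← hdm]
    exact hfirst.1
  · intro k' h1 h2
    by_cases hreg : k' < n - n % (m % n)
    · rw [airEntry_botleft m n j k' hn0 h0 (by omega) hreg]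
      simp only [ite_eq_right_iff]
      intro he
      exact absurd (mod_between (hke.trans he.symm) h1 (by omega)) (by simp)
    · rw [airEntry_botright m n j k' hn0 h0 (by omega) hreg]
      apply hfirst.2
      omega

/- ## statements -/

def StA (m n l : ℕ) : Prop :=
  ∀ i j k : ℕ, 2 * i ≤ l →
    airEntry m n j k = 1 →
    m ≤ j + airLam m n (2 * i + 1) → j < m →
    n ≤ k + airLam m n (2 * i) →
    k + airLam m n (2 * i) < n + (airBeta m n (2 * i) - 1) * airLam m n (2 * i + 1) →
    IsRightDist m n j k (airLam m n (2 * i + 1))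

def StB (m n l : ℕ) : Prop :=
  ∀ i j k c d : ℕ, 2 * i + 2 ≤ l →
    airEntry m n j k = 1 →
    m ≤ j + airLam m n (2 * i + 1) → j < m →
    n + (airBeta m n (2 * i) - 1) * airLam m n (2 * i + 1) ≤ k + airLam m n (2 * i) →
    k + airLam m n (2 * i) < n + airBeta m n (2 * i) * airLam m n (2 * i + 1) →
    d < airLam m n (2 * i + 2) →
    j + airLam m n (2 * i + 1) = m + c * airLam m n (2 * i + 2) + d →
    IsRightDist m n j k (airLam m n (2 * i + 1) - c * airLam m n (2 * i + 2))

/- ## shift lemma -/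

lemma shift_exists (m n p e : ℕ) (hn : 1 ≤ n) (hnm : n < m) (hr : m % n ≠ 0)
    (he : p = 2 * e) (hp : 1 ≤ e)
    (hn1 : 0 < n % (m % n)) (hm2 : 0 < (m % n) % (n % (m % n)))
    (hp0 : airLam m n p = n % (m % n))
    (hp1 : airLam m n (p + 1) = (m % n) % (n % (m % n))) :
    ∃ q D, p = q + 2 * D ∧
      ∀ t, airLam m n (p + t) = airLam (m % n) (n % (m % n)) (q + t) := by
  have hm1 : 0 < m % n := Nat.pos_of_ne_zero hr
  have hn1m : n % (m % n) < m % n := Nat.mod_lt _ hm1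
  rcases Nat.lt_trichotomy (m % n) (2 * (n % (m % n))) with hc|hc|hc
  · -- q = 0
    have hsub : (m % n) % (n % (m % n)) = m % n - n % (m % n) := by
      rw [Nat.mod_eq_sub_mod (le_of_lt hn1m)]
      exact Nat.mod_eq_of_lt (by omega)
    have h0 : airLam m n p = airLam (m % n) (n % (m % n)) 0 := by
      rw [airLam_zero]; exact hp0
    have h1 : airLam m n (p + 1) = airLam (m % n) (n % (m % n)) 1 := by
      rw [airLam_one, hp1, hsub]
    exact ⟨0, e, by omega, airLam_agree _ _ _ _ _ _ h0 h1⟩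
  · obtain ⟨x, hx⟩ : ∃ x, n % (m % n) = x := ⟨_, rfl⟩
    rw [hx] at hc hm2
    rw [hc, Nat.mul_mod_left] at hm2
    omega
  · -- q = 2
    have h20 : airLam (m % n) (n % (m % n)) 2 = n % (m % n) := by
      have e2 : airLam (m % n) (n % (m % n)) 2 =
          if airLam (m % n) (n % (m % n)) 1 = 0 then 0
          else airLam (m % n) (n % (m % n)) 0 % airLam (m % n) (n % (m % n)) 1 := rfl
      rw [e2, airLam_one, airLam_zero, if_neg (by omega)]
      exact Nat.mod_eq_of_lt (by omega)
    have h30 : airLam (m % n) (n % (m % n)) 3 = (m % n) % (n % (m % n)) := by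
      have e3 : airLam (m % n) (n % (m % n)) 3 =
          if airLam (m % n) (n % (m % n)) 2 = 0 then 0
          else airLam (m % n) (n % (m % n)) 1 % airLam (m % n) (n % (m % n)) 2 := rfl
      rw [e3, h20, airLam_one, if_neg (by omega)]
      exact (Nat.mod_eq_sub_mod (by omega)).symm
    have h0 : airLam m n p = airLam (m % n) (n % (m % n)) 2 := by rw [h20]; exact hp0
    have h1 : airLam m n (p + 1) = airLam (m % n) (n % (m % n)) 3 := by rw [h30]; exact hp1
    exact ⟨2, e - 1, by omega, airLam_agree _ _ _ _ _ _ h0 h1⟩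

/- ## inner blocks via the recursion -/

lemma mapped (m n p e l : ℕ) (hn : 1 ≤ n) (hnm : n < m) (hr : m % n ≠ 0)
    (he : p = 2 * e) (hp : 1 ≤ e)
    (hp0 : airLam m n p = n % (m % n))
    (hp1 : 0 < airLam m n (p + 1) → airLam m n (p + 1) = (m % n) % (n % (m % n)))
    (hl : 0 < airLam m n (l + 1)) (hl' : airLam m n (l + 2) = 0)
    (IH : 0 < n % (m % n) → ∀ l', 0 < airLam (m % n) (n % (m % n)) (l' + 1) →
        airLam (m % n) (n % (m % n)) (l' + 2) = 0 →
        StA (m % n) (n % (m % n)) l' ∧ StB (m % n) (n % (m % n)) l') :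
    (∀ i j k : ℕ, p ≤ 2 * i → 2 * i ≤ l → airEntry m n j k = 1 →
      m ≤ j + airLam m n (2 * i + 1) → j < m →
      n ≤ k + airLam m n (2 * i) →
      k + airLam m n (2 * i) < n + (airBeta m n (2 * i) - 1) * airLam m n (2 * i + 1) →
      IsRightDist m n j k (airLam m n (2 * i + 1))) ∧
    (∀ i j k c d : ℕ, p ≤ 2 * i → 2 * i + 2 ≤ l → airEntry m n j k = 1 →
      m ≤ j + airLam m n (2 * i + 1) → j < m →
      n + (airBeta m n (2 * i) - 1) * airLam m n (2 * i + 1) ≤ k + airLam m n (2 * i) →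
      k + airLam m n (2 * i) < n + airBeta m n (2 * i) * airLam m n (2 * i + 1) →
      d < airLam m n (2 * i + 2) →
      j + airLam m n (2 * i + 1) = m + c * airLam m n (2 * i + 2) + d →
      IsRightDist m n j k (airLam m n (2 * i + 1) - c * airLam m n (2 * i + 2))) := by
  by_cases hlp : p ≤ l
  case neg =>
    constructor
    · intro i j k hpi h2i _ _ _ _ _
      exact ((by omega : False)).elim
    · intro i j k c d hpi h2i _ _ _ _ _ _ _
      exact ((by omega : False)).elim
  case pos =>
  have hm1 : 0 < m % n := Nat.pos_of_ne_zero hr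
  have hm1n : m % n < n := Nat.mod_lt _ (by omega)
  have hn1m : n % (m % n) < m % n := Nat.mod_lt _ hm1
  have hppos : 0 < airLam m n (p + 1) := airLam_pos m n hn (by omega) hl
  have hn1 : 0 < n % (m % n) := by
    by_contra h
    have h0' : airLam m n p = 0 := by omega
    have := airLam_zero_mono m n (by omega) (show p ≤ p + 1 by omega) h0'
    omega
  have hp1' := hp1 hppos
  have hm2 : 0 < (m % n) % (n % (m % n)) := by omega
  obtain ⟨q, D, hpq, hagree⟩ := shift_exists m n p e hn hnm hr he hp hn1 hm2 hp0 hp1'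
  have hel1 : airLam (m % n) (n % (m % n)) (l - 2 * D + 1) = airLam m n (l + 1) := by
    have h := hagree (l + 1 - p)
    rw [show p + (l + 1 - p) = l + 1 by omega, show q + (l + 1 - p) = l - 2 * D + 1 by omega] at h
    exact h.symm
  have hel2 : airLam (m % n) (n % (m % n)) (l - 2 * D + 2) = airLam m n (l + 2) := by
    have h := hagree (l + 2 - p)
    rw [show p + (l + 2 - p) = l + 2 by omega, show q + (l + 2 - p) = l - 2 * D + 2 by omega] at h
    exact h.symm
  obtain ⟨IA, IB⟩ := IH hn1 (l - 2 * D) (by rw [hel1]; exact hl) (by rw [hel2]; exact hl')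
  have hidx : ∀ i τ, p ≤ 2 * i →
      airLam m n (2 * i + τ) = airLam (m % n) (n % (m % n)) (2 * (i - D) + τ) := by
    intro i τ hpi
    have h := hagree (2 * i + τ - p)
    rw [show p + (2 * i + τ - p) = 2 * i + τ by omega,
        show q + (2 * i + τ - p) = 2 * (i - D) + τ by omega] at h
    exact h
  constructor
  · intro i j k hpi h2i hent hj1 hj2 hk1 hk2
    have e0 := hidx i 0 hpi
    have e1 := hidx i 1 hpi
    have hbeta : airBeta m n (2 * i) = airBeta (m % n) (n % (m % n)) (2 * (i - D)) := by
      unfold airBeta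
      rw [show 2 * i + 1 = 2 * i + 1 from rfl] at e1
      rw [show (2 * i : ℕ) = 2 * i + 0 by omega, e0, e1]
      rw [show 2 * (i - D) + 0 = 2 * (i - D) by omega]
    have hL : airLam (m % n) (n % (m % n)) (2 * (i - D)) ≤ n % (m % n) := airLam_even_le _ _ _
    have hml : airLam (m % n) (n % (m % n)) (2 * (i - D) + 1) < m % n :=
      lt_of_le_of_lt (airLam_le_max _ _ _ (by omega)) (max_lt (by omega) (by omega))
    have e0' : airLam m n (2 * i) = airLam (m % n) (n % (m % n)) (2 * (i - D)) := by
      have := hidx i 0 hpi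
      rw [show 2 * i + 0 = 2 * i by omega, show 2 * (i - D) + 0 = 2 * (i - D) by omega] at this
      exact this
    have hlam_le : airLam m n (2 * i + 1) ≤ m % n := by rw [e1]; omega
    have hLam_le : airLam m n (2 * i) ≤ n % (m % n) := by rw [e0']; exact hL
    have hjreg : ¬ j < m - m % n := by omega
    have hkreg : n - n % (m % n) ≤ k := by omega
    have hent' : airEntry (m % n) (n % (m % n)) (j - (m - m % n)) (k - (n - n % (m % n))) = 1 := by
      rw [← airEntry_botright m n j k (by omega) hr hjreg (by omega)]; exact hent
    rw [e1]
    apply isRightDist_lift m n j k _ (by omega) hr hjreg hkreg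
    apply IA (i - D) (j - (m - m % n)) (k - (n - n % (m % n))) (by omega) hent'
    · rw [← e1]; omega
    · omega
    · rw [← e0']; omega
    · rw [← hbeta, ← e0', ← e1]; omega
  · intro i j k c d hpi h2i hent hj1 hj2 hk1 hk2 hd hjc
    have e1 := hidx i 1 hpi
    have e2 := hidx i 2 hpi
    have e0' : airLam m n (2 * i) = airLam (m % n) (n % (m % n)) (2 * (i - D)) := by
      have := hidx i 0 hpi
      rw [show 2 * i + 0 = 2 * i by omega, show 2 * (i - D) + 0 = 2 * (i - D) by omega] at this
      exact this
    have hbeta : airBeta m n (2 * i) = airBeta (m % n) (n % (m % n)) (2 * (i - D)) := by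
      unfold airBeta
      rw [show (2 * i : ℕ) = 2 * i + 0 by omega, hidx i 0 hpi, e1]
      rw [show 2 * (i - D) + 0 = 2 * (i - D) by omega]
    have hL : airLam (m % n) (n % (m % n)) (2 * (i - D)) ≤ n % (m % n) := airLam_even_le _ _ _
    have hml : airLam (m % n) (n % (m % n)) (2 * (i - D) + 1) < m % n :=
      lt_of_le_of_lt (airLam_le_max _ _ _ (by omega)) (max_lt (by omega) (by omega))
    have hlam_le : airLam m n (2 * i + 1) ≤ m % n := by rw [e1]; omega
    have hLam_le : airLam m n (2 * i) ≤ n % (m % n) := by rw [e0']; exact hL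
    have hjreg : ¬ j < m - m % n := by omega
    have hkreg : n - n % (m % n) ≤ k := by omega
    have hent' : airEntry (m % n) (n % (m % n)) (j - (m - m % n)) (k - (n - n % (m % n))) = 1 := by
      rw [← airEntry_botright m n j k (by omega) hr hjreg (by omega)]; exact hent
    rw [e1, e2]
    apply isRightDist_lift m n j k _ (by omega) hr hjreg hkreg
    apply IB (i - D) (j - (m - m % n)) (k - (n - n % (m % n))) c d (by omega) hent'
    · rw [← e1]; omega
    · omega
    · rw [← hbeta, ← e0', ← e1]; omega
    · rw [← hbeta, ← e0', ← e1]; omega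
    · rw [← e2]; omega
    · rw [← e1, ← e2]; omega

/- ## outermost block, packaged -/

lemma base_caseA (m n j k : ℕ) (hn : 1 ≤ n) (hnm : n < m) (hr : m % n ≠ 0)
    (hent : airEntry m n j k = 1)
    (hj1 : m ≤ j + m % n) (hj2 : j < m)
    (hk2 : k + n < n + (n / (m % n) - 1) * (m % n)) :
    IsRightDist m n j k (m % n) := by
  have hm1 : 0 < m % n := Nat.pos_of_ne_zero hr
  have hm1n : m % n < n := Nat.mod_lt _ (by omega)
  by_cases hb0 : n / (m % n) = 0
  · rw [hb0] at hk2; simp at hk2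
  obtain ⟨b, hb⟩ : ∃ b, n / (m % n) = b + 1 :=
    ⟨n / (m % n) - 1, (Nat.succ_pred_eq_of_pos (Nat.pos_of_ne_zero hb0)).symm⟩
  have hnd : n % (m % n) + (m % n) * (n / (m % n)) = n := Nat.mod_add_div n (m % n)
  rw [hb] at hnd hk2
  have h1 : (b + 1 - 1) * (m % n) = b * (m % n) := by simp
  rw [h1] at hk2
  have h2 : (m % n) * (b + 1) = b * (m % n) + m % n := by ring
  rw [h2] at hnd
  have hkr : k + m % n < n - n % (m % n) := by omega
  have hke : k % (m % n) = j - (m - m % n) := by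
    rw [airEntry_botleft m n j k (by omega) hr (by omega) (by omega)] at hent
    by_contra h
    rw [if_neg h] at hent
    exact absurd hent (by omega)
  exact baseA m n j k hn hr hj1 hj2 hkr hke

lemma base_caseB (m n j k c d : ℕ) (hn : 1 ≤ n) (hnm : n < m) (hr : m % n ≠ 0)
    (hent : airEntry m n j k = 1)
    (hj1 : m ≤ j + m % n) (hj2 : j < m)
    (hk1 : n + (n / (m % n) - 1) * (m % n) ≤ k + n)
    (hk2 : k + n < n + n / (m % n) * (m % n))
    (hd : d < n % (m % n))
    (hjc : j + m % n = m + c * (n % (m % n)) + d) :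
    IsRightDist m n j k (m % n - c * (n % (m % n))) := by
  have hm1 : 0 < m % n := Nat.pos_of_ne_zero hr
  have hm1n : m % n < n := Nat.mod_lt _ (by omega)
  have hnd : n % (m % n) + (m % n) * (n / (m % n)) = n := Nat.mod_add_div n (m % n)
  have hcm : (m % n) * (n / (m % n)) = n / (m % n) * (m % n) := Nat.mul_comm _ _
  have hke : k % (m % n) = j - (m - m % n) := by
    rw [airEntry_botleft m n j k (by omega) hr (by omega) (by omega)] at hent
    by_contra h
    rw [if_neg h] at hent
    exact absurd hent (by omega)
  exact baseB m n j k c d hn hnm hr hj1 hj2 (by omega) (by omega) hd (by omega) hke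

/- ## main induction -/

lemma main_aux : ∀ N n m : ℕ, n ≤ N → 1 ≤ n → n < m →
    ∀ l : ℕ, 0 < airLam m n (l + 1) → airLam m n (l + 2) = 0 →
    StA m n l ∧ StB m n l := by
  intro N
  induction N with
  | zero => intro n m h h1 _ _ _ _; exact absurd h (by omega)
  | succ N ih =>
    intro n m hN hn hnm l hl hl'
    by_cases hr : m % n = 0
    · -- divisor case: everything is vacuous
      have hge : 2 * n ≤ m := by
        obtain ⟨q, rfl⟩ := Nat.dvd_of_mod_eq_zero hr
        rcases Nat.lt_or_ge q 2 with h|h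
        · have : n * q ≤ n * 1 := Nat.mul_le_mul_left _ (by omega)
          omega
        · have : n * 2 ≤ n * q := Nat.mul_le_mul_left _ h
          omega
      have h3 : airLam m n 3 = 0 := by
        have e2 : airLam m n 2 = if airLam m n 1 = 0 then 0
            else airLam m n 0 % airLam m n 1 := rfl
        have e3 : airLam m n 3 = if airLam m n 2 = 0 then 0
            else airLam m n 1 % airLam m n 2 := rfl
        by_cases h2n : m = 2 * n
        · have hz : airLam m n 2 = 0 := by
            rw [e2, airLam_zero, airLam_one, if_neg (by omega),
              show m - n = n by omega, Nat.mod_self]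
          rw [e3, if_pos hz]
        · have hz : airLam m n 2 = n := by
            rw [e2, airLam_zero, airLam_one, if_neg (by omega)]
            exact Nat.mod_eq_of_lt (by omega)
          rw [e3, hz, if_neg (by omega), airLam_one]
          rw [← Nat.mod_eq_sub_mod (le_of_lt hnm)]
          exact hr
      have hll : l ≤ 1 := by
        by_contra hc
        have := airLam_zero_mono m n (show 1 ≤ 3 by omega) (show 3 ≤ l + 1 by omega) h3
        omega
      have hbeta : airBeta m n 0 ≤ 1 := by
        unfold airBeta
        rw [airLam_zero, airLam_one]
        calc n / (m - n) ≤ n / n := Nat.div_le_div_left (by omega) (by omega)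
          _ = 1 := Nat.div_self (by omega)
      constructor
      · intro i j k h2i hent hj1 hj2 hk1 hk2
        have hi0 : i = 0 := by omega
        subst hi0
        norm_num at hk2
        rw [airLam_zero, show airBeta m n 0 - 1 = 0 by omega, zero_mul] at hk2
        exact ((by omega : False)).elim
      · intro i j k c d h2i _ _ _ _ _ _ _
        exact ((by omega : False)).elim
    · -- n does not divide m
      have hm1 : 0 < m % n := Nat.pos_of_ne_zero hr
      have hm1n : m % n < n := Nat.mod_lt _ (by omega)
      have IH' : 0 < n % (m % n) → ∀ l', 0 < airLam (m % n) (n % (m % n)) (l' + 1) →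
          airLam (m % n) (n % (m % n)) (l' + 2) = 0 →
          StA (m % n) (n % (m % n)) l' ∧ StB (m % n) (n % (m % n)) l' := by
        intro hpos l' h1 h2
        have hx : n % (m % n) < m % n := Nat.mod_lt _ hm1
        exact ih (n % (m % n)) (m % n) (by omega) hpos hx l' h1 h2
      rcases Nat.lt_trichotomy m (2 * n) with hs|hs|hs
      · -- case n < m < 2n : outer block is i = 0
        have hmn : m % n = m - n := by
          rw [Nat.mod_eq_sub_mod (le_of_lt hnm)]
          exact Nat.mod_eq_of_lt (by omega)
        have e1' : airLam m n 1 = m % n := by rw [airLam_one]; omega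
        have h2 : airLam m n 2 = n % (m % n) := by
          have e : airLam m n 2 = if airLam m n 1 = 0 then 0
              else airLam m n 0 % airLam m n 1 := rfl
          rw [e, airLam_one, airLam_zero, if_neg (by omega), hmn]
        have h3 : 0 < airLam m n (2 + 1) → airLam m n (2 + 1) = (m % n) % (n % (m % n)) := by
          intro hpos
          have e : airLam m n 3 = if airLam m n 2 = 0 then 0
              else airLam m n 1 % airLam m n 2 := rfl
          show airLam m n 3 = (m % n) % (n % (m % n))
          rw [e, h2, airLam_one]
          by_cases hz : n % (m % n) = 0
          · rw [e, h2] at hpos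
            simp [hz] at hpos
          · rw [if_neg hz, hmn]
        have hbeta0 : airBeta m n 0 = n / (m % n) := by
          unfold airBeta
          rw [airLam_zero, airLam_one, hmn]
        have M := mapped m n 2 1 l hn hnm hr (by norm_num) le_rfl h2 h3 hl hl' IH'
        constructor
        · intro i j k h2i hent hj1 hj2 hk1 hk2
          rcases i with _|i0
          · norm_num at hj1 hk1 hk2 ⊢
            rw [e1'] at hj1 hk2 ⊢
            rw [airLam_zero] at hk1 hk2
            rw [hbeta0] at hk2
            exact base_caseA m n j k hn hnm hr hent hj1 hj2 hk2
          · exact M.1 (i0 + 1) j k (by omega) h2i hent hj1 hj2 hk1 hk2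
        · intro i j k c d h2i hent hj1 hj2 hk1 hk2 hd hjc
          rcases i with _|i0
          · norm_num at hj1 hk1 hk2 hd hjc ⊢
            rw [e1'] at hj1 hk1 hk2 hjc ⊢
            rw [airLam_zero] at hk1 hk2
            rw [hbeta0] at hk1 hk2
            rw [h2] at hd hjc ⊢
            exact base_caseB m n j k c d hn hnm hr hent hj1 hj2 hk1 hk2 hd hjc
          · exact M.2 (i0 + 1) j k c d (by omega) h2i hent hj1 hj2 hk1 hk2 hd hjc
      · exact absurd hs (by intro h; rw [h, Nat.mul_mod_left] at hr; exact hr rfl)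
      · -- case m > 2n : outer blocks are i = 0 (vacuous) and i = 1
        have e2 : airLam m n 2 = n := by
          have e : airLam m n 2 = if airLam m n 1 = 0 then 0
              else airLam m n 0 % airLam m n 1 := rfl
          rw [e, airLam_zero, airLam_one, if_neg (by omega)]
          exact Nat.mod_eq_of_lt (by omega)
        have e3 : airLam m n 3 = m % n := by
          have e : airLam m n 3 = if airLam m n 2 = 0 then 0
              else airLam m n 1 % airLam m n 2 := rfl
          rw [e, e2, airLam_one, if_neg (by omega)]
          exact (Nat.mod_eq_sub_mod (le_of_lt hnm)).symm
        have e4 : airLam m n 4 = n % (m % n) := by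
          have e : airLam m n 4 = if airLam m n 3 = 0 then 0
              else airLam m n 2 % airLam m n 3 := rfl
          rw [e, e3, e2, if_neg hr]
        have e5 : 0 < airLam m n (4 + 1) → airLam m n (4 + 1) = (m % n) % (n % (m % n)) := by
          intro hpos
          have e : airLam m n 5 = if airLam m n 4 = 0 then 0
              else airLam m n 3 % airLam m n 4 := rfl
          show airLam m n 5 = (m % n) % (n % (m % n))
          rw [e, e4, e3]
          by_cases hz : n % (m % n) = 0
          · rw [e, e4] at hpos
            simp [hz] at hpos
          · rw [if_neg hz]
        have hbeta0 : airBeta m n 0 = 0 := by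
          unfold airBeta
          rw [airLam_zero, airLam_one]
          exact Nat.div_eq_of_lt (by omega)
        have hbeta2 : airBeta m n 2 = n / (m % n) := by
          unfold airBeta
          rw [e2, e3]
        have M := mapped m n 4 2 l hn hnm hr (by norm_num) (by norm_num) e4 e5 hl hl' IH'
        constructor
        · intro i j k h2i hent hj1 hj2 hk1 hk2
          rcases i with _|(_|i0)
          · norm_num at hk1 hk2
            rw [airLam_zero, hbeta0] at hk2
            simp only [Nat.zero_sub, zero_mul, add_zero] at hk2
            exact ((by omega : False)).elim
          · norm_num at hj1 hk1 hk2 ⊢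
            rw [e3] at hj1 hk2 ⊢
            rw [e2] at hk1 hk2
            rw [hbeta2] at hk2
            exact base_caseA m n j k hn hnm hr hent hj1 hj2 hk2
          · exact M.1 (i0 + 1 + 1) j k (by omega) h2i hent hj1 hj2 hk1 hk2
        · intro i j k c d h2i hent hj1 hj2 hk1 hk2 hd hjc
          rcases i with _|(_|i0)
          · norm_num at hk1 hk2
            rw [airLam_zero, hbeta0] at hk2
            simp only [Nat.zero_sub, zero_mul, add_zero] at hk2
            exact ((by omega : False)).elim
          · norm_num at hj1 hk1 hk2 hd hjc ⊢
            rw [e3] at hj1 hk1 hk2 hjc ⊢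
            rw [e2] at hk1 hk2
            rw [hbeta2] at hk1 hk2
            rw [e4] at hd hjc ⊢
            exact base_caseB m n j k c d hn hnm hr hent hj1 hj2 hk1 hk2 hd hjc
          · exact M.2 (i0 + 1 + 1) j k c d (by omega) h2i hent hj1 hj2 hk1 hk2 hd hjc


/-- Right-distances in the `m × n` AIR matrix (with
`λ_i = airLam m n (i+1)`, `β_i = airBeta m n i`, `l` the largest index with `λ_l > 0`),
for a position `(j,k)` with `L(j,k) = 1` in the even-indexed block `I_{λ_{2i}×β_{2i}λ_{2i}}`
(rows `m-λ_{2i} … m-1`, columns `n-λ_{2i-1} … n-λ_{2i-1}+β_{2i}λ_{2i}-1`), with local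
indices `j_R = j - (m-λ_{2i})`, `k_R = k - (n-λ_{2i-1})`:
(a) if `k_R ≤ (β_{2i}-1)λ_{2i} - 1` then `d_right(j,k) = λ_{2i}`;
(b) if `(β_{2i}-1)λ_{2i} ≤ k_R ≤ β_{2i}λ_{2i} - 1` and `i ≤ ⌊l/2⌋ - 1`, then, writing
`j_R = c·λ_{2i+1} + d` with `0 ≤ d < λ_{2i+1}`, `d_right(j,k) = λ_{2i} - c·λ_{2i+1}`. -/
theorem air_right_distance (m n : ℕ) (hn : 1 ≤ n) (hnm : n < m)
    (l : ℕ) (hl : 0 < airLam m n (l + 1)) (hl' : airLam m n (l + 2) = 0) :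
    (∀ i j k : ℕ, 2 * i ≤ l →
      airEntry m n j k = 1 →
      m ≤ j + airLam m n (2 * i + 1) → j < m →
      n ≤ k + airLam m n (2 * i) →
      k + airLam m n (2 * i) < n + (airBeta m n (2 * i) - 1) * airLam m n (2 * i + 1) →
      IsRightDist m n j k (airLam m n (2 * i + 1))) ∧
    (∀ i j k c d : ℕ, 2 * i + 2 ≤ l →
      airEntry m n j k = 1 →
      m ≤ j + airLam m n (2 * i + 1) → j < m →
      n + (airBeta m n (2 * i) - 1) * airLam m n (2 * i + 1) ≤ k + airLam m n (2 * i) →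
      k + airLam m n (2 * i) < n + airBeta m n (2 * i) * airLam m n (2 * i + 1) →
      d < airLam m n (2 * i + 2) →
      j + airLam m n (2 * i + 1) = m + c * airLam m n (2 * i + 2) + d →
      IsRightDist m n j k (airLam m n (2 * i + 1) - c * airLam m n (2 * i + 2))) :=
  main_aux n n m le_rfl hn hnm l hl hl'
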